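/- arXiv:1706.09178 — 2 statements merged into one kernel-verified Lean document; each statement's English description precedes it below -/
import Mathlib

section
/- For the increasing sequence (β_j) of indecomposables, the index j_0 in the decomposition x = e β_{j_0} + f β_{j_0+1} (e ≥ 1, f ≥ 0) is characterized by the inequalities β_{j_0}/β_{j_0}' ≤ x/x' < β_{j_0+1}/β_{j_0+1}'. -/
open Real Filter

noncomputable def omg (D : ℕ) : ℝ := if D % 4 = 1 then (1 + Real.sqrt D) / 2 else Real.sqrt D

noncomputable def omgc (D : ℕ) : ℝ := if D % 4 = 1 then (1 - Real.sqrt D) / 2 else -Real.sqrt D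

noncomputable def sigmaD (D : ℕ) : ℝ := omg D + (⌊-omgc D⌋ : ℤ)

noncomputable def gam (D : ℕ) : ℕ → ℝ
  | 0 => sigmaD D
  | n + 1 => 1 / (gam D n - ⌊gam D n⌋)

/-- partial quotients of the continued fraction of σ_D -/
noncomputable def uD (D : ℕ) (n : ℕ) : ℤ := ⌊gam D n⌋

noncomputable def emb1 (D : ℕ) (x : ℤ × ℤ) : ℝ := (x.1 : ℝ) + (x.2 : ℝ) * omg D

noncomputable def emb2 (D : ℕ) (x : ℤ × ℤ) : ℝ := (x.1 : ℝ) + (x.2 : ℝ) * omgc D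

def conjp (D : ℕ) (x : ℤ × ℤ) : ℤ × ℤ := if D % 4 = 1 then (x.1 + x.2, -x.2) else (x.1, -x.2)

def TotPos (D : ℕ) (x : ℤ × ℤ) : Prop := 0 < emb1 D x ∧ 0 < emb2 D x

def Indec (D : ℕ) (x : ℤ × ℤ) : Prop :=
  TotPos D x ∧ ¬ ∃ y z : ℤ × ℤ, TotPos D y ∧ TotPos D z ∧ x = y + z

noncomputable def Nm (D : ℕ) (x : ℤ × ℤ) : ℝ := emb1 D x * emb2 D x

noncomputable def disc (D : ℕ) : ℝ := if D % 4 = 1 then (D : ℝ) else 4 * (D : ℝ)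

def UniqDec (D : ℕ) (x : ℤ × ℤ) : Prop :=
  ∃! m : Multiset (ℤ × ℤ), (∀ y ∈ m, Indec D y) ∧ m.sum = x

/-! ### Auxiliary lemmas -/

lemma not_isSquare_of_squarefree {D : ℕ} (hD2 : 2 ≤ D) (hsq : Squarefree D) : ¬ IsSquare D := by
  rintro ⟨k, rfl⟩
  have : IsUnit k := hsq k (dvd_refl _)
  have hk1 : k = 1 := Nat.isUnit_iff.mp this
  subst hk1
  norm_num at hD2

lemma irr_sqrtD {D : ℕ} (hD2 : 2 ≤ D) (hsq : Squarefree D) : Irrational (Real.sqrt D) :=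
  irrational_sqrt_natCast_iff.mpr (not_isSquare_of_squarefree hD2 hsq)

lemma irr_omg {D : ℕ} (hD2 : 2 ≤ D) (hsq : Squarefree D) : Irrational (omg D) := by
  have hs := irr_sqrtD hD2 hsq
  unfold omg
  split_ifs with h
  · have h1 : Irrational (((1 : ℤ) : ℝ) + Real.sqrt D) := hs.intCast_add 1
    have h2 : Irrational ((((1 : ℤ) : ℝ) + Real.sqrt D) / (2 : ℕ)) := h1.div_natCast two_ne_zero
    have : (((1 : ℤ) : ℝ) + Real.sqrt D) / ((2 : ℕ) : ℝ) = (1 + Real.sqrt D) / 2 := by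
      push_cast; ring
    rwa [this] at h2
  · exact hs

lemma irr_omgc {D : ℕ} (hD2 : 2 ≤ D) (hsq : Squarefree D) : Irrational (omgc D) := by
  have hs := irr_sqrtD hD2 hsq
  unfold omgc
  split_ifs with h
  · have h1 : Irrational (((1 : ℤ) : ℝ) + (-Real.sqrt D)) := hs.neg.intCast_add 1
    have h2 : Irrational ((((1 : ℤ) : ℝ) + (-Real.sqrt D)) / (2 : ℕ)) := h1.div_natCast two_ne_zero
    have : (((1 : ℤ) : ℝ) + (-Real.sqrt D)) / ((2 : ℕ) : ℝ) = (1 - Real.sqrt D) / 2 := by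
      push_cast; ring
    rwa [this] at h2
  · exact hs.neg

lemma int_comb_eq_zero {ω : ℝ} (hirr : Irrational ω) {a b : ℤ}
    (h : (a : ℝ) + (b : ℝ) * ω = 0) : a = 0 ∧ b = 0 := by
  rcases eq_or_ne b 0 with hb | hb
  · subst hb
    simp only [Int.cast_zero, zero_mul, add_zero] at h
    exact ⟨by exact_mod_cast h, rfl⟩
  · exfalso
    have hb' : (b : ℝ) ≠ 0 := Int.cast_ne_zero.mpr hb
    have hω : ω = (((-a : ℚ) / (b : ℚ) : ℚ) : ℝ) := by
      push_cast
      field_simp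
      linear_combination h
    exact (Rat.not_irrational _) (hω ▸ hirr)

lemma emb1_add (D : ℕ) (y z : ℤ × ℤ) : emb1 D (y + z) = emb1 D y + emb1 D z := by
  simp only [emb1, Prod.fst_add, Prod.snd_add]
  push_cast; ring

lemma emb2_add (D : ℕ) (y z : ℤ × ℤ) : emb2 D (y + z) = emb2 D y + emb2 D z := by
  simp only [emb2, Prod.fst_add, Prod.snd_add]
  push_cast; ring

lemma emb1_sub (D : ℕ) (y z : ℤ × ℤ) : emb1 D (y - z) = emb1 D y - emb1 D z := by
  simp only [emb1, Prod.fst_sub, Prod.snd_sub]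
  push_cast; ring

lemma emb2_sub (D : ℕ) (y z : ℤ × ℤ) : emb2 D (y - z) = emb2 D y - emb2 D z := by
  simp only [emb2, Prod.fst_sub, Prod.snd_sub]
  push_cast; ring

lemma emb1_smul (D : ℕ) (n : ℤ) (y : ℤ × ℤ) : emb1 D (n • y) = (n : ℝ) * emb1 D y := by
  simp only [emb1, Prod.smul_fst, Prod.smul_snd, smul_eq_mul]
  push_cast; ring

lemma emb2_smul (D : ℕ) (n : ℤ) (y : ℤ × ℤ) : emb2 D (n • y) = (n : ℝ) * emb2 D y := by
  simp only [emb2, Prod.smul_fst, Prod.smul_snd, smul_eq_mul]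
  push_cast; ring

lemma emb1_injective {D : ℕ} (hD2 : 2 ≤ D) (hsq : Squarefree D) {y z : ℤ × ℤ}
    (h : emb1 D y = emb1 D z) : y = z := by
  have h0 : emb1 D (y - z) = 0 := by rw [emb1_sub]; linarith
  have := int_comb_eq_zero (irr_omg hD2 hsq) (a := (y - z).1) (b := (y - z).2) h0
  have h1 : y.1 - z.1 = 0 := by simpa [Prod.fst_sub] using this.1
  have h2 : y.2 - z.2 = 0 := by simpa [Prod.snd_sub] using this.2
  have : y - z = 0 := Prod.ext (by simpa using h1) (by simpa using h2)
  exact sub_eq_zero.mp this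

lemma emb2_eq_zero {D : ℕ} (hD2 : 2 ≤ D) (hsq : Squarefree D) {y : ℤ × ℤ}
    (h : emb2 D y = 0) : y = 0 := by
  have := int_comb_eq_zero (irr_omgc hD2 hsq) (a := y.1) (b := y.2) h
  exact Prod.ext (by simpa using this.1) (by simpa using this.2)

def traceZ (D : ℕ) (y : ℤ × ℤ) : ℤ := if D % 4 = 1 then 2 * y.1 + y.2 else 2 * y.1

lemma traceZ_eq (D : ℕ) (y : ℤ × ℤ) : (traceZ D y : ℝ) = emb1 D y + emb2 D y := by
  unfold traceZ emb1 emb2 omg omgc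
  split_ifs with h <;> (push_cast; ring)

lemma traceZ_add (D : ℕ) (y z : ℤ × ℤ) : traceZ D (y + z) = traceZ D y + traceZ D z := by
  unfold traceZ
  split_ifs with h <;> simp [Prod.fst_add, Prod.snd_add] <;> ring

lemma one_le_traceZ {D : ℕ} {y : ℤ × ℤ} (hy : TotPos D y) : 1 ≤ traceZ D y := by
  have h0 : (0 : ℝ) < (traceZ D y : ℝ) := by
    rw [traceZ_eq]; exact add_pos hy.1 hy.2
  have : (0 : ℤ) < traceZ D y := by exact_mod_cast h0
  omega

lemma exists_indec_le {D : ℕ} : ∀ n : ℕ, ∀ w : ℤ × ℤ, traceZ D w ≤ n → TotPos D w →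
    ∃ z, Indec D z ∧ emb1 D z ≤ emb1 D w ∧ emb2 D z ≤ emb2 D w := by
  intro n
  induction n with
  | zero =>
    intro w hw hpos
    have := one_le_traceZ hpos
    omega
  | succ n ih =>
    intro w hw hpos
    by_cases hi : Indec D w
    · exact ⟨w, hi, le_refl _, le_refl _⟩
    · have hdec : ∃ y z : ℤ × ℤ, TotPos D y ∧ TotPos D z ∧ w = y + z := by
        by_contra hcon
        exact hi ⟨hpos, hcon⟩
      obtain ⟨y, z, hy, hz, rfl⟩ := hdec
      have hty : traceZ D y ≤ n := by
        have h1 := one_le_traceZ hz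
        have h2 : traceZ D (y + z) = traceZ D y + traceZ D z := traceZ_add D y z
        omega
      obtain ⟨u, hu, hu1, hu2⟩ := ih y hty hy
      refine ⟨u, hu, ?_, ?_⟩
      · rw [emb1_add]; linarith [hz.1]
      · rw [emb2_add]; linarith [hz.2]

lemma emb2_strict_anti {D : ℕ} (hD2 : 2 ≤ D) (hsq : Squarefree D)
    (β : ℤ → ℤ × ℤ) (hβind : ∀ j : ℤ, Indec D (β j))
    (hβmono : StrictMono fun j : ℤ => emb1 D (β j))
    {j k : ℤ} (hjk : j < k) : emb2 D (β k) < emb2 D (β j) := by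
  by_contra hle
  push_neg at hle
  set δ := β k - β j with hδ
  have h1 : 0 < emb1 D δ := by
    rw [hδ, emb1_sub]
    have := hβmono hjk
    simpa using sub_pos.mpr this
  have h2 : 0 ≤ emb2 D δ := by rw [hδ, emb2_sub]; linarith
  rcases h2.eq_or_lt with heq | hlt
  · have : δ = 0 := emb2_eq_zero hD2 hsq heq.symm
    rw [this] at h1
    simp [emb1] at h1
  · exact (hβind k).2 ⟨β j, δ, (hβind j).1, ⟨h1, hlt⟩, by rw [hδ]; ring⟩

set_option maxHeartbeats 1000000 in
theorem stmt9 (D : ℕ)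
    (hD2 : 2 ≤ D) (hsq : Squarefree D)
    (β : ℤ → ℤ × ℤ)
    (hβind : ∀ j : ℤ, Indec D (β j))
    (hβsurj : ∀ x : ℤ × ℤ, Indec D x → ∃ j : ℤ, β j = x)
    (hβmono : StrictMono fun j : ℤ => emb1 D (β j))
    (hβ0 : β 0 = (1, 0))
    (x : ℤ × ℤ) (hx : TotPos D x) (j₀ : ℤ) :
    (∃ e f : ℤ, 1 ≤ e ∧ 0 ≤ f ∧ x = e • β j₀ + f • β (j₀ + 1)) ↔
      (emb1 D (β j₀) / emb2 D (β j₀) ≤ emb1 D x / emb2 D x ∧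
       emb1 D x / emb2 D x < emb1 D (β (j₀ + 1)) / emb2 D (β (j₀ + 1))) := by
  set A1 := emb1 D (β j₀) with hA1
  set A2 := emb2 D (β j₀) with hA2
  set B1 := emb1 D (β (j₀ + 1)) with hB1
  set B2 := emb2 D (β (j₀ + 1)) with hB2
  set X1 := emb1 D x with hX1
  set X2 := emb2 D x with hX2
  have hA1p : 0 < A1 := (hβind j₀).1.1
  have hA2p : 0 < A2 := (hβind j₀).1.2
  have hB1p : 0 < B1 := (hβind (j₀ + 1)).1.1
  have hB2p : 0 < B2 := (hβind (j₀ + 1)).1.2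
  have hX1p : 0 < X1 := hx.1
  have hX2p : 0 < X2 := hx.2
  have hAB1 : A1 < B1 := hβmono (lt_add_one j₀)
  have hAB2 : B2 < A2 := emb2_strict_anti hD2 hsq β hβind hβmono (lt_add_one j₀)
  have hcross : A1 * B2 < B1 * A2 := by
    linarith [mul_lt_mul_of_pos_right hAB1 hB2p, mul_lt_mul_of_pos_left hAB2 hB1p]
  constructor
  · rintro ⟨e, f, he, hf, rfl⟩
    have he' : (1 : ℝ) ≤ (e : ℝ) := by exact_mod_cast he
    have hf' : (0 : ℝ) ≤ (f : ℝ) := by exact_mod_cast hf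
    have hx1 : X1 = (e : ℝ) * A1 + (f : ℝ) * B1 := by
      rw [hX1, emb1_add, emb1_smul, emb1_smul]
    have hx2 : X2 = (e : ℝ) * A2 + (f : ℝ) * B2 := by
      rw [hX2, emb2_add, emb2_smul, emb2_smul]
    constructor
    · rw [div_le_div_iff₀ hA2p hX2p]
      rw [hx1, hx2]
      linarith [mul_nonneg hf' (sub_nonneg.mpr hcross.le)]
    · rw [div_lt_div_iff₀ hX2p hB2p]
      rw [hx1, hx2]
      linarith [mul_nonneg (by linarith : (0 : ℝ) ≤ (e : ℝ) - 1) (sub_nonneg.mpr hcross.le), hcross]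
  · rintro ⟨h1, h2⟩
    have h1' : A1 * X2 ≤ X1 * A2 := (div_le_div_iff₀ hA2p hX2p).mp h1
    have h2' : X1 * B2 < B1 * X2 := (div_lt_div_iff₀ hX2p hB2p).mp h2
    set Δ : ℝ := A1 * B2 - A2 * B1 with hΔdef
    have hΔ : Δ < 0 := by
      rw [hΔdef]
      linarith [mul_lt_mul_of_pos_right hAB1 hB2p, mul_lt_mul_of_pos_left hAB2 hB1p]
    have hΔne : Δ ≠ 0 := ne_of_lt hΔ
    set s : ℝ := (X1 * B2 - X2 * B1) / Δ with hsdef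
    set t : ℝ := (A1 * X2 - A2 * X1) / Δ with htdef
    have hsx : X1 = s * A1 + t * B1 := by
      rw [hsdef, htdef, hΔdef]
      rw [div_mul_eq_mul_div, div_mul_eq_mul_div, ← add_div, eq_div_iff (show A1 * B2 - A2 * B1 ≠ 0 from hΔne)]
      ring
    have hsy : X2 = s * A2 + t * B2 := by
      rw [hsdef, htdef, hΔdef]
      rw [div_mul_eq_mul_div, div_mul_eq_mul_div, ← add_div, eq_div_iff (show A1 * B2 - A2 * B1 ≠ 0 from hΔne)]
      ring
    have hs : 0 < s := by
      rw [hsdef]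
      apply div_pos_of_neg_of_neg _ hΔ
      linarith
    have ht : 0 ≤ t := by
      rw [htdef]
      rw [div_nonneg_iff]
      right
      constructor
      · linarith
      · exact hΔ.le
    -- the key claim: no lattice point strictly inside the fundamental triangle
    have claim : ∀ (w : ℤ × ℤ) (u v : ℝ), 0 ≤ u → 0 ≤ v → 0 < u + v → u + v ≤ 1 →
        ¬(u = 1 ∧ v = 0) → ¬(u = 0 ∧ v = 1) →
        emb1 D w = u * A1 + v * B1 → emb2 D w = u * A2 + v * B2 → False := by
      intro w u v hu hv huv huv1 hne10 hne01 hw1 hw2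
      have hw1p : 0 < emb1 D w := by
        rcases hu.eq_or_lt with h | h
        · rw [hw1, ← h]
          have hv' : 0 < v := by linarith
          linarith [mul_pos hv' hB1p]
        · rw [hw1]
          linarith [mul_pos h hA1p, mul_nonneg hv hB1p.le]
      have hw2p : 0 < emb2 D w := by
        rcases hu.eq_or_lt with h | h
        · rw [hw2, ← h]
          have hv' : 0 < v := by linarith
          linarith [mul_pos hv' hB2p]
        · rw [hw2]
          linarith [mul_pos h hA2p, mul_nonneg hv hB2p.le]
      have hbd1 : emb1 D w < B1 := by
        rcases hu.eq_or_lt with h | h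
        · -- u = 0, then v ≠ 1 and v ≤ 1
          have hv1 : v ≠ 1 := fun hv1 => hne01 ⟨h.symm, hv1⟩
          have hvlt : v < 1 := lt_of_le_of_ne (by linarith) hv1
          rw [hw1, ← h]
          linarith [mul_lt_mul_of_pos_right hvlt hB1p]
        · rw [hw1]
          linarith [mul_lt_mul_of_pos_left hAB1 h, mul_le_mul_of_nonneg_right huv1 hB1p.le]
      have hbd2 : emb2 D w < A2 := by
        rcases hv.eq_or_lt with h | h
        · have hu1 : u ≠ 1 := fun hu1 => hne10 ⟨hu1, h.symm⟩
          have hult : u < 1 := lt_of_le_of_ne (by linarith) hu1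
          rw [hw2, ← h]
          linarith [mul_lt_mul_of_pos_right hult hA2p]
        · rw [hw2]
          linarith [mul_lt_mul_of_pos_left hAB2 h, mul_le_mul_of_nonneg_right huv1 hA2p.le]
      obtain ⟨z, hz, hz1, hz2⟩ := exists_indec_le (D := D) (traceZ D w).toNat w
        (Int.self_le_toNat _) ⟨hw1p, hw2p⟩
      obtain ⟨k, rfl⟩ := hβsurj z hz
      have hk1 : emb1 D (β k) < B1 := lt_of_le_of_lt hz1 hbd1
      have hklt : k < j₀ + 1 := by
        by_contra hk
        push_neg at hk
        rcases hk.eq_or_lt with h | h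
        · rw [← h] at hk1; exact lt_irrefl _ hk1
        · have := hβmono h
          simp only at this
          rw [hB1] at hk1
          linarith
      have hk2 : emb2 D (β k) < A2 := lt_of_le_of_lt hz2 hbd2
      have hkle : k ≤ j₀ := by omega
      rcases hkle.eq_or_lt with h | h
      · rw [h] at hk2; rw [hA2] at hk2; exact lt_irrefl _ hk2
      · have := emb2_strict_anti hD2 hsq β hβind hβmono h
        rw [hA2] at hk2
        linarith
    -- integrality of s and t
    set s' : ℝ := Int.fract s with hs'def
    set t' : ℝ := Int.fract t with ht'def
    have hs'0 : 0 ≤ s' := Int.fract_nonneg s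
    have ht'0 : 0 ≤ t' := Int.fract_nonneg t
    have hs'1 : s' < 1 := Int.fract_lt_one s
    have ht'1 : t' < 1 := Int.fract_lt_one t
    have hfracs : s' = s - (⌊s⌋ : ℝ) := rfl
    have hfract : t' = t - (⌊t⌋ : ℝ) := rfl
    set p : ℤ × ℤ := x - ⌊s⌋ • β j₀ - ⌊t⌋ • β (j₀ + 1) with hpdef
    have hp1 : emb1 D p = s' * A1 + t' * B1 := by
      rw [hpdef, emb1_sub, emb1_sub, emb1_smul, emb1_smul, ← hX1, hsx, hfracs, hfract]
      ring
    have hp2 : emb2 D p = s' * A2 + t' * B2 := by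
      rw [hpdef, emb2_sub, emb2_sub, emb2_smul, emb2_smul, ← hX2, hsy, hfracs, hfract]
      ring
    have hzero : s' = 0 ∧ t' = 0 := by
      by_contra hne
      rcases le_or_gt (s' + t') 1 with hst | hst
      · have hsum : 0 < s' + t' := by
          rcases hs'0.eq_or_lt with h | h
          · rcases ht'0.eq_or_lt with h' | h'
            · exact absurd ⟨h.symm, h'.symm⟩ hne
            · linarith
          · linarith
        exact claim p s' t' hs'0 ht'0 hsum hst
          (fun ⟨h, _⟩ => absurd h (ne_of_lt hs'1))
          (fun ⟨_, h⟩ => absurd h (ne_of_lt ht'1)) hp1 hp2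
      · set q : ℤ × ℤ := β j₀ + β (j₀ + 1) - p with hqdef
        have hq1 : emb1 D q = (1 - s') * A1 + (1 - t') * B1 := by
          rw [hqdef, emb1_sub, emb1_add, hp1, ← hA1, ← hB1]
          ring
        have hq2 : emb2 D q = (1 - s') * A2 + (1 - t') * B2 := by
          rw [hqdef, emb2_sub, emb2_add, hp2, ← hA2, ← hB2]
          ring
        exact claim q (1 - s') (1 - t') (by linarith) (by linarith) (by linarith)
          (by linarith)
          (fun ⟨_, h⟩ => by linarith [ht'1, (by linarith : t' = 1)])
          (fun ⟨h, _⟩ => by linarith [hs'1, (by linarith : s' = 1)]) hq1 hq2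
    have hseq : s = (⌊s⌋ : ℝ) := by
      have := hzero.1
      rw [hfracs] at this
      linarith
    have hteq : t = (⌊t⌋ : ℝ) := by
      have := hzero.2
      rw [hfract] at this
      linarith
    refine ⟨⌊s⌋, ⌊t⌋, ?_, ?_, ?_⟩
    · have : (0 : ℝ) < (⌊s⌋ : ℝ) := hseq ▸ hs
      have : 0 < ⌊s⌋ := by exact_mod_cast this
      omega
    · have : (0 : ℝ) ≤ (⌊t⌋ : ℝ) := hteq ▸ ht
      exact_mod_cast this
    · apply emb1_injective hD2 hsq
      rw [emb1_add, emb1_smul, emb1_smul, ← hA1, ← hB1, ← hX1, hsx, hseq, hteq]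
      rw [Int.floor_intCast, Int.floor_intCast]
end

section
/- Let α = e α_{i,r} + f α_{i,r+1} ∈ O_K^+ with i ≥ -1 odd, 0 ≤ r < u_{i+2}, e ≥ 1, f ≥ 0. Then N(α) < √Δ · ((r+1)e + (r+2)f) · (e + f). -/
open Real Filter

/-- first real embedding of α_i = p_i - q_i ω_D' -/
noncomputable def ar (D : ℕ) (p q : ℤ → ℤ) (i : ℤ) : ℝ := (p i : ℝ) - (q i : ℝ) * omgc D

/-- second real embedding (Galois conjugate) of α_i -/
noncomputable def ac (D : ℕ) (p q : ℤ → ℤ) (i : ℤ) : ℝ := (p i : ℝ) - (q i : ℝ) * omg D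

/-- first embedding of the semiconvergent α_{i,r} = α_i + r α_{i+1} -/
noncomputable def ar2 (D : ℕ) (p q : ℤ → ℤ) (i r : ℤ) : ℝ := ar D p q i + (r : ℝ) * ar D p q (i + 1)

/-- conjugate embedding of the semiconvergent α_{i,r} -/
noncomputable def ac2 (D : ℕ) (p q : ℤ → ℤ) (i r : ℤ) : ℝ := ac D p q i + (r : ℝ) * ac D p q (i + 1)

/-- N_i = |N(α_i)| -/
noncomputable def Ni (D : ℕ) (p q : ℤ → ℤ) (i : ℤ) : ℝ := |ar D p q i * ac D p q i|

section Aux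
variable {D : ℕ}

private lemma aux_sqrt_irr (hD2 : 2 ≤ D) (hsq : Squarefree D) : Irrational (Real.sqrt D) := by
  rw [irrational_sqrt_natCast_iff]
  rintro ⟨k, rfl⟩
  have hu := hsq k dvd_rfl
  rw [Nat.isUnit_iff] at hu
  subst hu; omega

private lemma aux_sqrt_gt_one (hD2 : 2 ≤ D) : 1 < Real.sqrt D := by
  have h : (1:ℝ) < (D:ℝ) := by exact_mod_cast hD2.trans_lt' one_lt_two
  have := Real.sqrt_lt_sqrt (by norm_num) h
  rwa [Real.sqrt_one] at this

private lemma aux_omg_gt_one (hD2 : 2 ≤ D) : 1 < omg D := by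
  have h := aux_sqrt_gt_one hD2
  unfold omg; split <;> linarith

private lemma aux_omgc_neg (hD2 : 2 ≤ D) : omgc D < 0 := by
  have h := aux_sqrt_gt_one hD2
  unfold omgc; split <;> linarith

private lemma aux_omg_sub_omgc : omg D - omgc D = Real.sqrt (disc D) := by
  unfold omg omgc disc
  split
  · ring
  · rw [show (4:ℝ) * (D:ℝ) = (2 * Real.sqrt D)^2 by
      rw [mul_pow, Real.sq_sqrt (by positivity)]; norm_num]
    rw [Real.sqrt_sq (by positivity)]; ring

private lemma aux_omg_irr (hD2 : 2 ≤ D) (hsq : Squarefree D) : Irrational (omg D) := by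
  have h := aux_sqrt_irr hD2 hsq
  unfold omg; split
  · rw [show (2:ℝ) = ((2:ℤ):ℝ) by norm_num]
    refine (irrational_div_intCast_iff).2 ⟨by norm_num, ?_⟩
    rw [show (1:ℝ) = ((1:ℤ):ℝ) by norm_num]
    exact (irrational_intCast_add_iff).2 h
  · exact h

private lemma aux_sigma_irr (hD2 : 2 ≤ D) (hsq : Squarefree D) : Irrational (sigmaD D) :=
  (irrational_add_intCast_iff).2 (aux_omg_irr hD2 hsq)

private lemma aux_floor_negomgc_nonneg (hD2 : 2 ≤ D) : 0 ≤ ⌊-omgc D⌋ :=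
  Int.floor_nonneg.2 (by linarith [aux_omgc_neg hD2])

private lemma aux_sigma_gt_one (hD2 : 2 ≤ D) : 1 < sigmaD D := by
  have h1 := aux_omg_gt_one hD2
  have h2 := aux_floor_negomgc_nonneg hD2
  have : (0:ℝ) ≤ (⌊-omgc D⌋ : ℤ) := by exact_mod_cast h2
  unfold sigmaD; linarith

private lemma aux_gam_zero : gam D 0 = sigmaD D := rfl

private lemma aux_gam_succ (n : ℕ) : gam D (n+1) = 1 / (gam D n - ⌊gam D n⌋) := rfl

private lemma aux_gam_irr (hD2 : 2 ≤ D) (hsq : Squarefree D) : ∀ n, Irrational (gam D n) := by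
  intro n
  induction n with
  | zero => exact aux_sigma_irr hD2 hsq
  | succ n ih =>
    rw [aux_gam_succ, one_div, irrational_inv_iff]
    exact (irrational_sub_intCast_iff).2 ih

private lemma aux_fract_gam_pos (hD2 : 2 ≤ D) (hsq : Squarefree D) (n : ℕ) : 0 < Int.fract (gam D n) :=
  Int.fract_pos.2 ((aux_gam_irr hD2 hsq n).ne_int _)

private lemma aux_gam_gt_one (hD2 : 2 ≤ D) (hsq : Squarefree D) : ∀ n, 1 < gam D n := by
  intro n
  cases n with
  | zero => exact aux_sigma_gt_one hD2
  | succ n =>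
    rw [aux_gam_succ]
    have h0 := aux_fract_gam_pos hD2 hsq n
    have h1 := Int.fract_lt_one (gam D n)
    rw [show gam D n - ⌊gam D n⌋ = Int.fract (gam D n) from rfl]
    exact (one_lt_div h0).2 h1

private lemma aux_uD_pos (hD2 : 2 ≤ D) (hsq : Squarefree D) (n : ℕ) : 1 ≤ uD D n := by
  unfold uD
  exact Int.le_floor.2 (by exact_mod_cast (aux_gam_gt_one hD2 hsq n).le)

private lemma aux_gam_mul_fract (hD2 : 2 ≤ D) (hsq : Squarefree D) (n : ℕ) : gam D (n+1) * Int.fract (gam D n) = 1 := by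
  rw [aux_gam_succ, show gam D n - ⌊gam D n⌋ = Int.fract (gam D n) from rfl]
  exact one_div_mul_cancel (aux_fract_gam_pos hD2 hsq n).ne'

end Aux

section PQ
variable {D : ℕ} (p q : ℤ → ℤ)

/-- key integer identity: p 0 = ⌊ω⌋ -/
private lemma aux_p0 (hD2 : 2 ≤ D) (hsq : Squarefree D)
    (hp0 : p 0 = ⌈(uD D 0 : ℚ) / 2⌉) : p 0 = ⌊omg D⌋ := by
  have hσ : sigmaD D = omg D + (⌊-omgc D⌋ : ℤ) := rfl
  have hu0 : uD D 0 = ⌊omg D⌋ + ⌊-omgc D⌋ := by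
    unfold uD
    rw [aux_gam_zero, hσ, Int.floor_add_intCast]
  by_cases h : D % 4 = 1
  · have hneg : -omgc D = omg D - 1 := by unfold omg omgc; rw [if_pos h, if_pos h]; ring
    have hfl : ⌊-omgc D⌋ = ⌊omg D⌋ - 1 := by
      rw [hneg, show (1:ℝ) = ((1:ℤ):ℝ) by norm_num, Int.floor_sub_intCast]
    rw [hp0, hu0, hfl]
    set k := ⌊omg D⌋ with hk
    rw [show ((k + (k-1) : ℤ) : ℚ) / 2 = (-1/2 : ℚ) + k by push_cast; ring,
      Int.ceil_add_intCast]
    norm_num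
  · have hneg : -omgc D = omg D := by unfold omg omgc; rw [if_neg h, if_neg h]; ring
    rw [hp0, hu0, hneg]
    set k := ⌊omg D⌋ with hk
    rw [show ((k + k : ℤ) : ℚ) / 2 = (k : ℚ) by push_cast; ring, Int.ceil_intCast]

private lemma aux_E0 (hpm1 : p (-1) = 1) (hqm1 : q (-1) = 0) :
    ac D p q (((0:ℕ):ℤ) - 1) = 1 := by
  norm_num [ac, hpm1, hqm1]

private lemma aux_A0 (hpm1 : p (-1) = 1) (hqm1 : q (-1) = 0) :
    ar D p q (((0:ℕ):ℤ) - 1) = 1 := by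
  norm_num [ar, hpm1, hqm1]

private lemma aux_E1 (hD2 : 2 ≤ D) (hsq : Squarefree D)
    (hp0 : p 0 = ⌈(uD D 0 : ℚ) / 2⌉) (hq0 : q 0 = 1) :
    ac D p q (((1:ℕ):ℤ) - 1) = (⌊omg D⌋ : ℝ) - omg D := by
  norm_num [ac, aux_p0 p hD2 hsq hp0, hq0]

private lemma aux_A1 (hD2 : 2 ≤ D) (hsq : Squarefree D)
    (hp0 : p 0 = ⌈(uD D 0 : ℚ) / 2⌉) (hq0 : q 0 = 1) :
    ar D p q (((1:ℕ):ℤ) - 1) = (⌊omg D⌋ : ℝ) - omgc D := by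
  norm_num [ar, aux_p0 p hD2 hsq hp0, hq0]

private lemma aux_Erec
    (hprec : ∀ i : ℤ, -1 ≤ i → p (i + 2) = uD D (i + 2).toNat * p (i + 1) + p i)
    (hqrec : ∀ i : ℤ, -1 ≤ i → q (i + 2) = uD D (i + 2).toNat * q (i + 1) + q i)
    (n : ℕ) :
    ac D p q (((n+2:ℕ):ℤ) - 1) =
      (uD D (n+1) : ℝ) * ac D p q (((n+1:ℕ):ℤ) - 1) + ac D p q ((n:ℤ) - 1) := by
  have hp := hprec ((n:ℤ)-1) (by omega)
  have hq := hqrec ((n:ℤ)-1) (by omega)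
  have ht : ((n:ℤ)-1+2).toNat = n+1 := by omega
  rw [ht] at hp hq
  have i1 : (((n+2:ℕ)):ℤ) - 1 = ((n:ℤ)-1) + 2 := by push_cast; ring
  have i2 : (((n+1:ℕ)):ℤ) - 1 = ((n:ℤ)-1) + 1 := by push_cast; ring
  rw [ac, ac, ac, i1, i2, hp, hq]
  push_cast
  ring

private lemma aux_Arec
    (hprec : ∀ i : ℤ, -1 ≤ i → p (i + 2) = uD D (i + 2).toNat * p (i + 1) + p i)
    (hqrec : ∀ i : ℤ, -1 ≤ i → q (i + 2) = uD D (i + 2).toNat * q (i + 1) + q i)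
    (n : ℕ) :
    ar D p q (((n+2:ℕ):ℤ) - 1) =
      (uD D (n+1) : ℝ) * ar D p q (((n+1:ℕ):ℤ) - 1) + ar D p q ((n:ℤ) - 1) := by
  have hp := hprec ((n:ℤ)-1) (by omega)
  have hq := hqrec ((n:ℤ)-1) (by omega)
  have ht : ((n:ℤ)-1+2).toNat = n+1 := by omega
  rw [ht] at hp hq
  have i1 : (((n+2:ℕ)):ℤ) - 1 = ((n:ℤ)-1) + 2 := by push_cast; ring
  have i2 : (((n+1:ℕ)):ℤ) - 1 = ((n:ℤ)-1) + 1 := by push_cast; ring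
  rw [ar, ar, ar, i1, i2, hp, hq]
  push_cast
  ring

end PQ

section Core
variable {D : ℕ} (p q : ℤ → ℤ)
variable (hD2 : 2 ≤ D) (hsq : Squarefree D)
variable (hpm1 : p (-1) = 1) (hqm1 : q (-1) = 0)
variable (hp0 : p 0 = ⌈(uD D 0 : ℚ) / 2⌉) (hq0 : q 0 = 1)
variable (hprec : ∀ i : ℤ, -1 ≤ i → p (i + 2) = uD D (i + 2).toNat * p (i + 1) + p i)
variable (hqrec : ∀ i : ℤ, -1 ≤ i → q (i + 2) = uD D (i + 2).toNat * q (i + 1) + q i)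

private lemma aux_key (hD2 : 2 ≤ D) (hsq : Squarefree D)
    (hpm1 : p (-1) = 1) (hqm1 : q (-1) = 0)
    (hp0 : p 0 = ⌈(uD D 0 : ℚ) / 2⌉) (hq0 : q 0 = 1)
    (hprec : ∀ i : ℤ, -1 ≤ i → p (i + 2) = uD D (i + 2).toNat * p (i + 1) + p i)
    (hqrec : ∀ i : ℤ, -1 ≤ i → q (i + 2) = uD D (i + 2).toNat * q (i + 1) + q i) :
    ∀ n : ℕ, ac D p q ((n:ℤ) - 1) = -(gam D (n+1)) * ac D p q (((n+1:ℕ):ℤ) - 1) := by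
  intro n
  induction n with
  | zero =>
    rw [aux_E0 p q hpm1 hqm1, aux_E1 p q hD2 hsq hp0 hq0]
    have hmf := aux_gam_mul_fract hD2 hsq 0
    have hfr : Int.fract (gam D 0) = omg D - (⌊omg D⌋ : ℝ) := by
      rw [aux_gam_zero, show sigmaD D = omg D + ((⌊-omgc D⌋ : ℤ) : ℝ) from rfl,
        Int.fract_add_intCast, Int.fract]
    rw [hfr] at hmf
    linear_combination -hmf
  | succ n ih =>
    have hrec := aux_Erec p q hprec hqrec n
    have hmf := aux_gam_mul_fract hD2 hsq (n+1)
    rw [Int.fract] at hmf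
    have hu : (uD D (n+1) : ℝ) = ((⌊gam D (n+1)⌋ : ℤ) : ℝ) := rfl
    rw [hu] at hrec
    set g1 := gam D (n+1)
    set g2 := gam D (n+2)
    set E0 := ac D p q ((n:ℤ) - 1)
    set E1 := ac D p q (((n+1:ℕ):ℤ) - 1)
    set E2 := ac D p q (((n+2:ℕ):ℤ) - 1)
    -- goal : E1 = -g2 * E2 ;  ih : E0 = -g1 * E1 ; hrec : E2 = ⌊g1⌋ * E1 + E0
    -- hmf : g2 * (g1 - ⌊g1⌋) = 1
    linear_combination g2 * hrec + g2 * ih - E1 * hmf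

private lemma aux_E_sign (hD2 : 2 ≤ D) (hsq : Squarefree D)
    (hpm1 : p (-1) = 1) (hqm1 : q (-1) = 0)
    (hp0 : p 0 = ⌈(uD D 0 : ℚ) / 2⌉) (hq0 : q 0 = 1)
    (hprec : ∀ i : ℤ, -1 ≤ i → p (i + 2) = uD D (i + 2).toNat * p (i + 1) + p i)
    (hqrec : ∀ i : ℤ, -1 ≤ i → q (i + 2) = uD D (i + 2).toNat * q (i + 1) + q i) :
    ∀ n : ℕ, 0 < (-1:ℝ)^n * ac D p q ((n:ℤ) - 1) := by
  intro n
  induction n with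
  | zero => rw [aux_E0 p q hpm1 hqm1]; norm_num
  | succ n ih =>
    have hkey := aux_key p q hD2 hsq hpm1 hqm1 hp0 hq0 hprec hqrec n
    have hg : (0:ℝ) < gam D (n+1) := lt_trans one_pos (aux_gam_gt_one hD2 hsq (n+1))
    rw [hkey] at ih
    have hidx : (((n+1:ℕ)):ℤ) - 1 = ((n+1:ℕ):ℤ) - 1 := rfl
    set E1 := ac D p q (((n+1:ℕ):ℤ) - 1)
    -- ih : 0 < (-1)^n * (-(gam D (n+1)) * E1)
    have ht : (-1:ℝ)^n * E1 < 0 := by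
      by_contra hcon
      push_neg at hcon
      nlinarith [mul_nonneg hg.le hcon]
    rw [pow_succ]
    nlinarith [ht]

private lemma aux_A_pos_mono (hD2 : 2 ≤ D) (hsq : Squarefree D)
    (hpm1 : p (-1) = 1) (hqm1 : q (-1) = 0)
    (hp0 : p 0 = ⌈(uD D 0 : ℚ) / 2⌉) (hq0 : q 0 = 1)
    (hprec : ∀ i : ℤ, -1 ≤ i → p (i + 2) = uD D (i + 2).toNat * p (i + 1) + p i)
    (hqrec : ∀ i : ℤ, -1 ≤ i → q (i + 2) = uD D (i + 2).toNat * q (i + 1) + q i) :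
    ∀ n : ℕ, 0 < ar D p q ((n:ℤ) - 1) ∧
      ar D p q ((n:ℤ) - 1) < ar D p q (((n+1:ℕ):ℤ) - 1) := by
  intro n
  induction n with
  | zero =>
    rw [aux_A0 p q hpm1 hqm1, aux_A1 p q hD2 hsq hp0 hq0]
    have hk : (1:ℤ) ≤ ⌊omg D⌋ := Int.le_floor.2 (by
      exact_mod_cast (aux_omg_gt_one hD2).le)
    have hk' : (1:ℝ) ≤ (⌊omg D⌋ : ℝ) := by exact_mod_cast hk
    have hc := aux_omgc_neg (D := D) hD2
    constructor
    · norm_num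
    · linarith
  | succ n ih =>
    obtain ⟨h0, h1⟩ := ih
    have h1' : 0 < ar D p q (((n+1:ℕ):ℤ) - 1) := lt_trans h0 h1
    have hrec := aux_Arec p q hprec hqrec n
    have hu : (1:ℤ) ≤ uD D (n+1) := aux_uD_pos hD2 hsq (n+1)
    have hu' : (1:ℝ) ≤ (uD D (n+1) : ℝ) := by exact_mod_cast hu
    refine ⟨h1', ?_⟩
    rw [hrec]
    nlinarith

private lemma aux_det (hpm1 : p (-1) = 1) (hqm1 : q (-1) = 0) (hq0 : q 0 = 1)
    (hprec : ∀ i : ℤ, -1 ≤ i → p (i + 2) = uD D (i + 2).toNat * p (i + 1) + p i)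
    (hqrec : ∀ i : ℤ, -1 ≤ i → q (i + 2) = uD D (i + 2).toNat * q (i + 1) + q i) :
    ∀ n : ℕ, p ((n:ℤ)) * q ((n:ℤ) - 1) - p ((n:ℤ) - 1) * q ((n:ℤ)) = (-1:ℤ)^(n+1) := by
  intro n
  induction n with
  | zero => norm_num [hpm1, hqm1, hq0]
  | succ n ih =>
    have hp := hprec ((n:ℤ)-1) (by omega)
    have hq := hqrec ((n:ℤ)-1) (by omega)
    have ht : ((n:ℤ)-1+2).toNat = n+1 := by omega
    rw [ht] at hp hq
    have i1 : (((n+1:ℕ)):ℤ) = ((n:ℤ)-1) + 2 := by push_cast; ring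
    have i2 : (((n+1:ℕ)):ℤ) - 1 = ((n:ℤ)-1) + 1 := by push_cast; ring
    rw [i2, i1, hp, hq]
    have i3 : ((n:ℤ)-1) + 1 = (n:ℤ) := by ring
    rw [i3]
    linear_combination (-1 : ℤ) * ih

private lemma aux_cross (hpm1 : p (-1) = 1) (hqm1 : q (-1) = 0) (hq0 : q 0 = 1)
    (hprec : ∀ i : ℤ, -1 ≤ i → p (i + 2) = uD D (i + 2).toNat * p (i + 1) + p i)
    (hqrec : ∀ i : ℤ, -1 ≤ i → q (i + 2) = uD D (i + 2).toNat * q (i + 1) + q i)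
    (n : ℕ) :
    ar D p q (((n+1:ℕ):ℤ) - 1) * ac D p q ((n:ℤ) - 1) -
      ar D p q ((n:ℤ) - 1) * ac D p q (((n+1:ℕ):ℤ) - 1) =
      (-1:ℝ)^n * (omg D - omgc D) := by
  have hd := aux_det p q hpm1 hqm1 hq0 hprec hqrec n
  have hdR := congrArg (fun z : ℤ => (z:ℝ)) hd
  push_cast at hdR
  rw [show (((n+1:ℕ)):ℤ) - 1 = (n:ℤ) by push_cast; ring]
  simp only [ar, ac]
  linear_combination (omgc D - omg D) * hdR

end Core

set_option maxHeartbeats 800000 in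
theorem stmt15 (D : ℕ)
    (hD2 : 2 ≤ D) (hsq : Squarefree D)
    (p q : ℤ → ℤ)
    (hpm1 : p (-1) = 1) (hqm1 : q (-1) = 0)
    (hp0 : p 0 = ⌈(uD D 0 : ℚ) / 2⌉) (hq0 : q 0 = 1)
    (hprec : ∀ i : ℤ, -1 ≤ i → p (i + 2) = uD D (i + 2).toNat * p (i + 1) + p i)
    (hqrec : ∀ i : ℤ, -1 ≤ i → q (i + 2) = uD D (i + 2).toNat * q (i + 1) + q i)
    (i r e f : ℤ) (hi : -1 ≤ i) (hodd : Odd i)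
    (hr0 : 0 ≤ r) (hr : r < uD D (i + 2).toNat)
    (he : 1 ≤ e) (hf : 0 ≤ f)
    (hα : 0 < (e : ℝ) * ar2 D p q i r + (f : ℝ) * ar2 D p q i (r + 1) ∧
           0 < (e : ℝ) * ac2 D p q i r + (f : ℝ) * ac2 D p q i (r + 1)) :
    ((e : ℝ) * ar2 D p q i r + (f : ℝ) * ar2 D p q i (r + 1)) *
      ((e : ℝ) * ac2 D p q i r + (f : ℝ) * ac2 D p q i (r + 1)) <
    Real.sqrt (disc D) * ((r + 1 : ℝ) * e + (r + 2 : ℝ) * f) * ((e : ℝ) + f) := by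
  obtain ⟨hx, hy⟩ := hα
  set m : ℕ := (i + 1).toNat with hmdef
  have hm : (m : ℤ) = i + 1 := Int.toNat_of_nonneg (by omega)
  have hmeven : Even m := by
    obtain ⟨t, ht⟩ := hodd
    have : (m : ℤ) = 2 * (t + 1) := by omega
    have ht2 : m = 2 * (t+1).toNat := by omega
    exact ⟨(t+1).toNat, by omega⟩
  -- identifications
  have e1 : ar D p q i = ar D p q ((m:ℤ) - 1) := by rw [show ((m:ℤ) - 1) = i by omega]
  have e2 : ar D p q (i + 1) = ar D p q (((m+1:ℕ):ℤ) - 1) := by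
    rw [show (((m+1:ℕ):ℤ) - 1) = i + 1 by push_cast; omega]
  have e3 : ac D p q i = ac D p q ((m:ℤ) - 1) := by rw [show ((m:ℤ) - 1) = i by omega]
  have e4 : ac D p q (i + 1) = ac D p q (((m+1:ℕ):ℤ) - 1) := by
    rw [show (((m+1:ℕ):ℤ) - 1) = i + 1 by push_cast; omega]
  set X1 := ar D p q ((m:ℤ) - 1) with hX1def
  set X2 := ar D p q (((m+1:ℕ):ℤ) - 1) with hX2def
  set Y1 := ac D p q ((m:ℤ) - 1) with hY1def
  set Y2 := ac D p q (((m+1:ℕ):ℤ) - 1) with hY2def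
  -- facts
  have hA := aux_A_pos_mono p q hD2 hsq hpm1 hqm1 hp0 hq0 hprec hqrec m
  have hX1pos : 0 < X1 := hA.1
  have hX12 : X1 ≤ X2 := hA.2.le
  have hX2pos : 0 < X2 := lt_of_lt_of_le hX1pos hX12
  have hY1pos : 0 < Y1 := by
    have h := aux_E_sign p q hD2 hsq hpm1 hqm1 hp0 hq0 hprec hqrec m
    rwa [hmeven.neg_one_pow, one_mul] at h
  have hY2neg : Y2 < 0 := by
    have h := aux_E_sign p q hD2 hsq hpm1 hqm1 hp0 hq0 hprec hqrec (m+1)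
    have hodd' : Odd (m+1) := hmeven.add_one
    rw [hodd'.neg_one_pow] at h
    nlinarith
  have hcross := aux_cross p q hpm1 hqm1 hq0 hprec hqrec m
  have hkey : X2 * Y1 < Real.sqrt (disc D) := by
    rw [hmeven.neg_one_pow, one_mul, aux_omg_sub_omgc (D := D)] at hcross
    nlinarith [mul_neg_of_pos_of_neg hX1pos hY2neg]
  -- cast facts
  have he' : (1:ℝ) ≤ (e:ℝ) := by exact_mod_cast he
  have hf' : (0:ℝ) ≤ (f:ℝ) := by exact_mod_cast hf
  have hr0' : (0:ℝ) ≤ (r:ℝ) := by exact_mod_cast hr0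
  -- rewrite goal and hypotheses
  simp only [ar2, ac2, e1, e2, e3, e4] at hx hy ⊢
  push_cast at hx hy ⊢
  set C1 : ℝ := ((r:ℝ) + 1) * e + ((r:ℝ) + 2) * f with hC1def
  set C2 : ℝ := (e:ℝ) + f with hC2def
  have hC1 : (1:ℝ) ≤ C1 := by
    rw [hC1def]
    nlinarith [mul_nonneg hr0' (by linarith : (0:ℝ) ≤ (e:ℝ)),
      mul_nonneg (by linarith : (0:ℝ) ≤ (r:ℝ) + 2) hf']
  have hC2 : (1:ℝ) ≤ C2 := by rw [hC2def]; linarith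
  have hB : (0:ℝ) ≤ (r:ℝ) * e + ((r:ℝ) + 1) * f :=
    add_nonneg (mul_nonneg hr0' (by linarith)) (mul_nonneg (by linarith) hf')
  have h1 : (e:ℝ) * (X1 + (r:ℝ) * X2) + (f:ℝ) * (X1 + ((r:ℝ) + 1) * X2) ≤ C1 * X2 := by
    nlinarith [mul_nonneg (by linarith : (0:ℝ) ≤ (e:ℝ) + f) (sub_nonneg.2 hX12)]
  have h2 : (e:ℝ) * (Y1 + (r:ℝ) * Y2) + (f:ℝ) * (Y1 + ((r:ℝ) + 1) * Y2) ≤ C2 * Y1 := by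
    nlinarith [mul_nonpos_of_nonneg_of_nonpos hB hY2neg.le]
  have hstep1 : ((e:ℝ) * (X1 + (r:ℝ) * X2) + (f:ℝ) * (X1 + ((r:ℝ) + 1) * X2)) *
      ((e:ℝ) * (Y1 + (r:ℝ) * Y2) + (f:ℝ) * (Y1 + ((r:ℝ) + 1) * Y2)) ≤ (C1 * X2) * (C2 * Y1) :=
    mul_le_mul h1 h2 hy.le (hx.le.trans h1)
  have hC12 : (0:ℝ) < C1 * C2 := mul_pos (by linarith) (by linarith)
  have hstep2 : (C1 * X2) * (C2 * Y1) < Real.sqrt (disc D) * C1 * C2 := by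
    calc (C1 * X2) * (C2 * Y1) = C1 * C2 * (X2 * Y1) := by ring
      _ < C1 * C2 * Real.sqrt (disc D) := by exact (mul_lt_mul_of_pos_left hkey hC12)
      _ = Real.sqrt (disc D) * C1 * C2 := by ring
  calc ((e:ℝ) * (X1 + (r:ℝ) * X2) + (f:ℝ) * (X1 + ((r:ℝ) + 1) * X2)) *
      ((e:ℝ) * (Y1 + (r:ℝ) * Y2) + (f:ℝ) * (Y1 + ((r:ℝ) + 1) * Y2))
      ≤ (C1 * X2) * (C2 * Y1) := hstep1
    _ < Real.sqrt (disc D) * C1 * C2 := hstep2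
end
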